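/- Let d ≥ 1 and g be integers, and let S be an additive subsemigroup of ℕ × ℤ such that: (i) the subgroup of ℤ × ℤ generated by S is all of ℤ × ℤ; (ii) there is a constant C with |s| ≤ Cn for every (n,s) ∈ S with n ≥ 1; (iii) there is n₀ ≥ 1 such that for every n ≥ n₀ the slice S_n := { s ∈ ℤ : (n,s) ∈ S } is finite of cardinality dn − g + 1. Then the limits s_min = lim_{n→∞} (min S_n)/n and s_max = lim_{n→∞} (max S_n)/n exist as real numbers, and s_max − s_min = d. Consequently, the closure of the convex hull Λ of { s/n : (n,s) ∈ S, n ≥ 1 } in ℝ is the compact interval [s_min, s_max] of length d. -/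

import Mathlib

open Filter

/-- The `n`-th sgSlice of a subset `S ⊆ ℕ × ℤ`. -/
def sgSlice (S : Set (ℕ × ℤ)) (n : ℕ) : Set ℤ := {s : ℤ | (n, s) ∈ S}

/-- The `n`-th sgSlice viewed as a set of real numbers. -/
def sgSliceR (S : Set (ℕ × ℤ)) (n : ℕ) : Set ℝ := (fun s : ℤ => (s : ℝ)) '' sgSlice S n



lemma fekete (u : ℕ → ℝ) (N : ℕ) (hN : 1 ≤ N)
    (hsub : ∀ m, N ≤ m → ∀ n, N ≤ n → u (m + n) ≤ u m + u n)
    (C : ℝ) (hC : ∀ n, N ≤ n → |u n| ≤ C * n) :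
    ∃ l : ℝ, Tendsto (fun n => u n / n) atTop (nhds l) ∧ ∀ n, N ≤ n → l ≤ u n / n := by
  have hN0 : (0:ℝ) < N := by exact_mod_cast hN
  have hC0 : 0 ≤ C := by
    have h1 := le_trans (abs_nonneg (u N)) (hC N le_rfl)
    rw [mul_comm] at h1
    exact nonneg_of_mul_nonneg_right h1 hN0
  set T : Set ℝ := {x : ℝ | ∃ n, N ≤ n ∧ x = u n / n} with hT
  have hTne : T.Nonempty := ⟨u N / N, N, le_rfl, rfl⟩
  have hTbdd : BddBelow T := by
    refine ⟨-C, ?_⟩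
    rintro x ⟨n, hn, rfl⟩
    have hn0 : (0:ℝ) < n := by exact_mod_cast (hN.trans hn)
    have h1 := (abs_le.1 (hC n hn)).1
    rw [le_div_iff₀ hn0]
    calc -C * n = -(C * n) := by ring
    _ ≤ u n := by linarith
  set l := sInf T with hl
  have hlow : ∀ n, N ≤ n → l ≤ u n / n := fun n hn => csInf_le hTbdd ⟨n, hn, rfl⟩
  refine ⟨l, ?_, hlow⟩
  rw [Metric.tendsto_atTop]
  intro ε hε
  obtain ⟨x, ⟨m, hm, rfl⟩, hxlt⟩ : ∃ x ∈ T, x < l + ε / 2 :=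
    exists_lt_of_csInf_lt hTne (by linarith)
  have hm1 : 1 ≤ m := hN.trans hm
  have hm0 : (0:ℝ) < m := by exact_mod_cast hm1
  have key : ∀ q : ℕ, ∀ r, N ≤ r → u (q * m + r) ≤ q * u m + u r := by
    intro q
    induction q with
    | zero => intro r hr; simp
    | succ q ih =>
      intro r hr
      have h1 : u (m + (q * m + r)) ≤ u m + u (q * m + r) :=
        hsub m hm (q * m + r) (le_trans hr (Nat.le_add_left _ _))
      have h2 := ih r hr
      have h3 : (q + 1) * m + r = m + (q * m + r) := by ring
      rw [h3]
      push_cast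
      have : ((q:ℝ) + 1) * u m = q * u m + u m := by ring
      linarith
  have humm : |u m / m| ≤ C := by
    rw [abs_div, abs_of_pos hm0, div_le_iff₀ hm0]
    exact hC m hm
  obtain ⟨K, hK⟩ := exists_nat_gt (4 * C * (N + m) / ε)
  refine ⟨max (N + m) (K + 1), ?_⟩
  intro n hn
  have hn1 : N + m ≤ n := le_trans (le_max_left _ _) hn
  have hnK : (4 * C * (N + m) / ε) < n := by
    have h5 : (K:ℝ) < n := by
      have h6 : K + 1 ≤ n := le_trans (le_max_right _ _) hn
      exact_mod_cast Nat.lt_of_lt_of_le (Nat.lt_succ_self K) h6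
    linarith
  have hn0 : (0:ℝ) < n := by
    have : 1 ≤ n := by omega
    exact_mod_cast this
  set q := (n - N) / m with hq
  set r := n - q * m with hr
  have hcomm : q * m = m * q := Nat.mul_comm _ _
  have hdm : m * q + (n - N) % m = n - N := Nat.div_add_mod _ _
  have hmod : (n - N) % m < m := Nat.mod_lt _ (by omega)
  have hqmn : q * m ≤ n := by omega
  have hrN : N ≤ r := by omega
  have hrlt : r < N + m := by omega
  have hnqr : n = q * m + r := by omega
  have hun : u n ≤ q * u m + u r := by rw [hnqr]; exact key q r hrN
  have hr0 : (0:ℝ) ≤ r := by positivity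
  have hrle : (r:ℝ) ≤ (N:ℝ) + m := by exact_mod_cast le_of_lt hrlt
  have hur : u r ≤ C * ((N:ℝ) + m) := by
    have h7 := (abs_le.1 (hC r hrN)).2
    calc u r ≤ C * r := h7
    _ ≤ C * ((N:ℝ) + m) := by exact mul_le_mul_of_nonneg_left hrle hC0
  have hqm' : (q:ℝ) * m = (n:ℝ) - r := by
    have h8 : (q:ℝ) * m + r = n := by exact_mod_cast hnqr.symm
    linarith
  have e1 : (q:ℝ) * u m = (n:ℝ) * (u m / m) - (r:ℝ) * (u m / m) := by
    rw [← sub_mul, ← hqm']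
    field_simp
  have e2 : -((C:ℝ) * ((N:ℝ) + m)) ≤ (r:ℝ) * (u m / m) := by
    have h9 : -|u m / m| ≤ u m / m := neg_abs_le _
    have h10 : (r:ℝ) * (-|u m / m|) ≤ (r:ℝ) * (u m / m) :=
      mul_le_mul_of_nonneg_left h9 hr0
    have h11 : (r:ℝ) * |u m / m| ≤ ((N:ℝ) + m) * C :=
      mul_le_mul hrle humm (abs_nonneg _) (by positivity)
    have h12 : (r:ℝ) * (-|u m / m|) = -((r:ℝ) * |u m / m|) := by ring
    have h13 : ((N:ℝ) + m) * C = C * ((N:ℝ) + m) := by ring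
    linarith
  have e3 : (n:ℝ) * (u m / m) ≤ (n:ℝ) * (l + ε / 2) :=
    mul_le_mul_of_nonneg_left (le_of_lt hxlt) (le_of_lt hn0)
  have h2 : u n ≤ (n:ℝ) * (l + ε / 2) + 2 * (C * ((N:ℝ) + m)) := by linarith
  have hfrac : 2 * (C * ((N:ℝ) + m)) < ε / 2 * n := by
    rw [div_lt_iff₀ hε] at hnK
    linarith
  have hl_le : l ≤ u n / n := hlow n (by omega)
  have hup : u n / n < l + ε := by
    rw [div_lt_iff₀ hn0]
    have h14 : (n:ℝ) * (l + ε/2) + ε / 2 * n = (l + ε) * n := by ring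
    linarith
  rw [Real.dist_eq, abs_sub_lt_iff]
  constructor <;> linarith
lemma sg_smul_add_mem (S : Set (ℕ × ℤ)) (hadd : ∀ a ∈ S, ∀ b ∈ S, a + b ∈ S) :
    ∀ x ∈ S, ∀ y ∈ S, ∀ k : ℕ, k • x + y ∈ S := by
  intro x hx y hy k
  induction k with
  | zero => simpa using hy
  | succ k ih =>
    have : x + (k • x + y) ∈ S := hadd x hx _ ih
    rw [succ_nsmul']
    simpa [add_assoc] using this

lemma sg_smul_mem (S : Set (ℕ × ℤ)) (hadd : ∀ a ∈ S, ∀ b ∈ S, a + b ∈ S) :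
    ∀ x ∈ S, ∀ k : ℕ, 1 ≤ k → k • x ∈ S := by
  intro x hx k hk
  obtain ⟨k, rfl⟩ := Nat.exists_eq_add_of_le hk
  have := sg_smul_add_mem S hadd x hx x hx k
  rw [add_comm 1 k, succ_nsmul]
  exact this

lemma sg_mem3 (S : Set (ℕ × ℤ)) (hadd : ∀ a ∈ S, ∀ b ∈ S, a + b ∈ S)
    (A B C : ℕ × ℤ) (hA : A ∈ S) (hB : B ∈ S) (hC : C ∈ S)
    (p i j : ℕ) (h : 1 ≤ p + i + j) : p • A + i • B + j • C ∈ S := by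
  rcases Nat.eq_zero_or_pos j with hj | hj
  · rcases Nat.eq_zero_or_pos i with hi | hi
    · subst hj; subst hi
      simpa using sg_smul_mem S hadd A hA p (by omega)
    · subst hj
      simpa using sg_smul_add_mem S hadd A hA _ (sg_smul_mem S hadd B hB i hi) p
  · rw [add_assoc]
    exact sg_smul_add_mem S hadd A hA _
      (sg_smul_add_mem S hadd B hB _ (sg_smul_mem S hadd C hC j hj) i) p

lemma key_card (d g : ℤ) (S : Set (ℕ × ℤ)) (hadd : ∀ a ∈ S, ∀ b ∈ S, a + b ∈ S)
    (n₀ : ℕ)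
    (hslice : ∀ n : ℕ, n₀ ≤ n →
      (sgSlice S n).Finite ∧ ((sgSlice S n).ncard : ℤ) = d * n - g + 1)
    (M' : ℕ) (hM' : 1 ≤ M') (u L : ℤ) (hL : 0 ≤ L)
    (h0 : ((M', u) : ℕ × ℤ) ∈ S) (h1 : ((M', u + 1) : ℕ × ℤ) ∈ S)
    (h2 : ((M', u + 1 + L) : ℕ × ℤ) ∈ S) :
    L + 1 ≤ d * (M' : ℤ) := by
  set k : ℕ := n₀ + L.toNat + (L * (L + 1) - g).toNat + 1 with hk
  have hLt : ((L.toNat : ℤ)) = L := Int.toNat_of_nonneg hL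
  have hk1 : 1 ≤ k := by omega
  have hkL : L ≤ (k : ℤ) := by
    have h : L.toNat ≤ k := by omega
    omega
  have hkbig : L * (L + 1) - g < (k : ℤ) := by
    have h := Int.self_le_toNat (L * (L + 1) - g)
    have h' : (L * (L + 1) - g).toNat < k := by omega
    have h'' : ((L * (L + 1) - g).toNat : ℤ) < (k : ℤ) := by exact_mod_cast h'
    omega
  have hkn₀ : n₀ ≤ k * M' := by
    calc n₀ ≤ k := by omega
    _ = k * 1 := (Nat.mul_one k).symm
    _ ≤ k * M' := Nat.mul_le_mul_left k hM'
  -- the interval is contained in the slice of k*M'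
  have hsubset : Set.Icc ((k : ℤ) * u) ((k : ℤ) * u + ((k : ℤ) - L) * (L + 1))
      ⊆ sgSlice S (k * M') := by
    intro y hy
    obtain ⟨hy1, hy2⟩ := hy
    set x := y - (k : ℤ) * u with hx
    have hx0 : 0 ≤ x := by omega
    have hxle : x ≤ ((k : ℤ) - L) * (L + 1) := by omega
    set j := x / (L + 1) with hjdef
    set i := x % (L + 1) with hidef
    have hL1 : (0 : ℤ) < L + 1 := by omega
    have hi0 : 0 ≤ i := Int.emod_nonneg x (by omega)
    have hiL : i < L + 1 := Int.emod_lt_of_pos x hL1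
    have hj0 : 0 ≤ j := Int.ediv_nonneg hx0 (le_of_lt hL1)
    have hjk : j ≤ (k : ℤ) - L := by
      have h := Int.ediv_le_ediv hL1 hxle
      rwa [Int.mul_ediv_cancel _ (by omega)] at h
    have hex : x = i + j * (L + 1) := by
      have h := Int.mul_ediv_add_emod x (L + 1)
      linarith [mul_comm (L + 1) j]
    set i' := i.toNat with hi'
    set j' := j.toNat with hj'
    have hi'c : ((i' : ℤ)) = i := Int.toNat_of_nonneg hi0
    have hj'c : ((j' : ℤ)) = j := Int.toNat_of_nonneg hj0
    have hij : i' + j' ≤ k := by omega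
    set p' := k - i' - j' with hp'
    have hmem := sg_mem3 S hadd _ _ _ h0 h1 h2 p' i' j' (by omega)
    have hpc : ((p' : ℤ)) = (k : ℤ) - i - j := by omega
    have hcoord : p' • ((M', u) : ℕ × ℤ) + i' • ((M', u + 1) : ℕ × ℤ)
        + j' • ((M', u + 1 + L) : ℕ × ℤ) = ((k * M', y) : ℕ × ℤ) := by
      have hy2' : y = (k : ℤ) * u + (i + j * (L + 1)) := by linarith
      refine Prod.ext ?_ ?_
      · show p' * M' + i' * M' + j' * M' = k * M'
        have hsum : p' + i' + j' = k := by omega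
        calc p' * M' + i' * M' + j' * M' = (p' + i' + j') * M' := by ring
        _ = k * M' := by rw [hsum]
      · show (p' : ℤ) * u + (i' : ℤ) * (u + 1) + (j' : ℤ) * (u + 1 + L) = y
        rw [hpc, hi'c, hj'c]
        linear_combination hy2'.symm
    show ((k * M', y) : ℕ × ℤ) ∈ S
    rw [← hcoord]
    exact hmem
  obtain ⟨hfin, hcard⟩ := hslice (k * M') hkn₀
  have hpos : (0 : ℤ) ≤ ((k : ℤ) - L) * (L + 1) := mul_nonneg (by omega) (by omega)
  have hIcc : (Set.Icc ((k : ℤ) * u) ((k : ℤ) * u + ((k : ℤ) - L) * (L + 1))).ncard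
      = (((k : ℤ) - L) * (L + 1) + 1).toNat := by
    rw [← Finset.coe_Icc, Set.ncard_coe_finset, Int.card_Icc]
    congr 1
    ring
  have hle : (Set.Icc ((k : ℤ) * u) ((k : ℤ) * u + ((k : ℤ) - L) * (L + 1))).ncard
      ≤ (sgSlice S (k * M')).ncard := Set.ncard_le_ncard hsubset hfin
  have hmain : ((k : ℤ) - L) * (L + 1) + 1 ≤ d * ((k : ℤ) * M') - g + 1 := by
    have c1 : ((k : ℤ) - L) * (L + 1) + 1
        = ((((k : ℤ) - L) * (L + 1) + 1).toNat : ℤ) := (Int.toNat_of_nonneg (by omega)).symm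
    rw [c1, ← hIcc]
    have c2 : ((Set.Icc ((k : ℤ) * u) ((k : ℤ) * u + ((k : ℤ) - L) * (L + 1))).ncard : ℤ)
        ≤ ((sgSlice S (k * M')).ncard : ℤ) := by exact_mod_cast hle
    rw [hcard] at c2
    calc ((Set.Icc ((k : ℤ) * u) ((k : ℤ) * u + ((k : ℤ) - L) * (L + 1))).ncard : ℤ)
        ≤ d * ((k * M' : ℕ) : ℤ) - g + 1 := c2
    _ = d * ((k : ℤ) * M') - g + 1 := by push_cast; ring
  by_contra hcon
  push_neg at hcon
  have hdM : d * (M' : ℤ) ≤ L := by omega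
  have hmul : (k : ℤ) * (d * M') ≤ (k : ℤ) * L :=
    mul_le_mul_of_nonneg_left hdM (by positivity)
  nlinarith [hmain, hmul, hkbig]

lemma exists_pair (S : Set (ℕ × ℤ)) (hadd : ∀ a ∈ S, ∀ b ∈ S, a + b ∈ S)
    (hgen : AddSubgroup.closure ((fun p : ℕ × ℤ => ((p.1 : ℤ), p.2)) '' S) = ⊤)
    (hz : ∀ s : ℤ, ((0, s) : ℕ × ℤ) ∈ S → s = 0) :
    ∃ (N : ℕ) (t : ℤ), 1 ≤ N ∧ ((N, t) : ℕ × ℤ) ∈ S ∧ ((N, t - 1) : ℕ × ℤ) ∈ S := by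
  set im := (fun p : ℕ × ℤ => ((p.1 : ℤ), p.2)) '' S with him
  have him_add : ∀ x ∈ im, ∀ y ∈ im, x + y ∈ im := by
    rintro x ⟨p, hp, rfl⟩ y ⟨q, hq, rfl⟩
    exact ⟨p + q, hadd p hp q hq, by simp [Prod.ext_iff]⟩
  have haux : ∀ a b : ℤ × ℤ, (a ∈ im ∨ a = 0) → (b ∈ im ∨ b = 0) →
      (a + b ∈ im ∨ a + b = 0) := by
    rintro a b (ha | rfl) (hb | rfl)
    · exact Or.inl (him_add a ha b hb)
    · simpa using Or.inl ha
    · simpa using Or.inl hb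
    · simp
  have h01 : (((0 : ℤ), (1 : ℤ)) : ℤ × ℤ) ∈ AddSubgroup.closure im := by
    rw [hgen]; trivial
  have hrep : ∃ a b : ℤ × ℤ, (a ∈ im ∨ a = 0) ∧ (b ∈ im ∨ b = 0) ∧
      ((0 : ℤ), (1 : ℤ)) = a - b := by
    refine AddSubgroup.closure_induction
      (fun y hy => ⟨y, 0, Or.inl hy, Or.inr rfl, by simp⟩)
      ⟨0, 0, Or.inr rfl, Or.inr rfl, by simp⟩
      (fun y z _ _ hy hz => ?_) (fun y _ hy => ?_) h01
    · obtain ⟨a1, b1, ha1, hb1, e1⟩ := hy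
      obtain ⟨a2, b2, ha2, hb2, e2⟩ := hz
      exact ⟨a1 + a2, b1 + b2, haux _ _ ha1 ha2, haux _ _ hb1 hb2, by
        rw [e1, e2]; abel⟩
    · obtain ⟨a, b, ha, hb, e⟩ := hy
      exact ⟨b, a, hb, ha, by rw [e]; abel⟩
  obtain ⟨a, b, ha, hb, heq⟩ := hrep
  rcases ha with ⟨p, hpS, rfl⟩ | rfl
  · rcases hb with ⟨q, hqS, rfl⟩ | rfl
    · -- both in image
      rw [Prod.ext_iff] at heq
      obtain ⟨h1, h2⟩ := heq
      simp at h1 h2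
      have hfst : p.1 = q.1 := by exact_mod_cast (by omega : (p.1 : ℤ) = (q.1 : ℤ))
      by_cases hp0 : p.1 = 0
      · exfalso
        have hq0 : q.1 = 0 := by omega
        have e1 : p.2 = 0 := hz p.2 (by rw [← hp0]; exact hpS)
        have e2 : q.2 = 0 := hz q.2 (by rw [← hq0]; exact hqS)
        omega
      · refine ⟨p.1, p.2, by omega, by simpa using hpS, ?_⟩
        have : ((p.1, p.2 - 1) : ℕ × ℤ) = q := by
          rw [Prod.ext_iff]
          exact ⟨hfst, by omega⟩
        rw [this]; exact hqS
    · -- b = 0 : a = (0,1)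
      exfalso
      rw [Prod.ext_iff] at heq
      obtain ⟨h1, h2⟩ := heq
      simp at h1 h2
      have hp0 : p.1 = 0 := by exact_mod_cast h1.symm
      have := hz p.2 (by rw [← hp0]; exact hpS)
      omega
  · rcases hb with ⟨q, hqS, rfl⟩ | rfl
    · exfalso
      rw [Prod.ext_iff] at heq
      obtain ⟨h1, h2⟩ := heq
      simp at h1 h2
      have hq0 : q.1 = 0 := by omega
      have := hz q.2 (by rw [← hq0]; exact hqS)
      omega
    · exfalso
      rw [Prod.ext_iff] at heq
      obtain ⟨h1, h2⟩ := heq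
      simp at h2

/-- Let `S ⊆ ℕ × ℤ` be an additive subsemigroup which generates
`ℤ × ℤ` as a group, has linearly bounded slices, and whose `n`-th sgSlice has
cardinality `d·n - g + 1` for all large `n`. Then `(min S_n)/n` and
`(max S_n)/n` converge to real numbers `s_min` and `s_max` with
`s_max - s_min = d`, and the closure of the convex hull of
`{ s/n : (n,s) ∈ S, n ≥ 1 }` is the compact interval `[s_min, s_max]`
(of length `d`). -/
theorem statement_13 (d g : ℤ) (hd : 1 ≤ d) (S : Set (ℕ × ℤ))
    (hadd : ∀ a ∈ S, ∀ b ∈ S, a + b ∈ S)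
    (hgen : AddSubgroup.closure ((fun p : ℕ × ℤ => ((p.1 : ℤ), p.2)) '' S) = ⊤)
    (hbdd : ∃ C : ℝ, ∀ p ∈ S, 1 ≤ p.1 → |(p.2 : ℝ)| ≤ C * p.1)
    (hslice : ∃ n₀ : ℕ, 1 ≤ n₀ ∧ ∀ n : ℕ, n₀ ≤ n →
      (sgSlice S n).Finite ∧ ((sgSlice S n).ncard : ℤ) = d * n - g + 1) :
    ∃ smin smax : ℝ,
      Tendsto (fun n : ℕ => sInf (sgSliceR S n) / n) atTop (nhds smin) ∧
      Tendsto (fun n : ℕ => sSup (sgSliceR S n) / n) atTop (nhds smax) ∧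
      smax - smin = (d : ℝ) ∧
      closure (convexHull ℝ
          {x : ℝ | ∃ p ∈ S, 1 ≤ p.1 ∧ x = (p.2 : ℝ) / (p.1 : ℝ)})
        = Set.Icc smin smax := by
  obtain ⟨C, hC⟩ := hbdd
  obtain ⟨n₀, hn₀1, hsl⟩ := hslice
  set N₁ : ℕ := n₀ + g.toNat with hN₁def
  have hN₁1 : 1 ≤ N₁ := by omega
  have hfin : ∀ n, N₁ ≤ n → (sgSlice S n).Finite := fun n hn => (hsl n (by omega)).1
  have hcard : ∀ n, N₁ ≤ n → ((sgSlice S n).ncard : ℤ) = d * n - g + 1 :=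
    fun n hn => (hsl n (by omega)).2
  have hne : ∀ n, N₁ ≤ n → (sgSlice S n).Nonempty := by
    intro n hn
    rw [← Set.ncard_pos (hfin n hn)]
    have h1 := hcard n hn
    have hng : g ≤ (n : ℤ) := by
      have h := Int.self_le_toNat g
      omega
    have h2 : (1 : ℤ) * n ≤ d * n := mul_le_mul_of_nonneg_right hd (by positivity)
    have h3 : (0 : ℤ) < (sgSlice S n).ncard := by
      rw [h1]
      have : (0:ℤ) ≤ (n:ℤ) := by positivity
      linarith
    exact_mod_cast h3
  set a : ℕ → ℤ := fun n => sInf (sgSlice S n) with hadef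
  set b : ℕ → ℤ := fun n => sSup (sgSlice S n) with hbdef
  have haS : ∀ n, N₁ ≤ n → ((n, a n) : ℕ × ℤ) ∈ S :=
    fun n hn => (hne n hn).csInf_mem (hfin n hn)
  have hbS : ∀ n, N₁ ≤ n → ((n, b n) : ℕ × ℤ) ∈ S :=
    fun n hn => (hne n hn).csSup_mem (hfin n hn)
  have ha_le : ∀ n, N₁ ≤ n → ∀ s ∈ sgSlice S n, a n ≤ s :=
    fun n hn s hs => csInf_le (hfin n hn).bddBelow hs
  have hb_ge : ∀ n, N₁ ≤ n → ∀ s ∈ sgSlice S n, s ≤ b n :=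
    fun n hn s hs => le_csSup (hfin n hn).bddAbove hs
  have hab : ∀ n, N₁ ≤ n → a n ≤ b n := fun n hn => ha_le n hn (b n) (hbS n hn)
  -- cardinality gap bound
  have hgap : ∀ n, N₁ ≤ n → d * n - g ≤ b n - a n := by
    intro n hn
    have hsub : sgSlice S n ⊆ Set.Icc (a n) (b n) :=
      fun s hs => ⟨ha_le n hn s hs, hb_ge n hn s hs⟩
    have h1 : (sgSlice S n).ncard ≤ (Set.Icc (a n) (b n)).ncard :=
      Set.ncard_le_ncard hsub (Set.finite_Icc _ _)
    have h2 : (Set.Icc (a n) (b n)).ncard = (b n + 1 - a n).toNat := by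
      rw [← Finset.coe_Icc, Set.ncard_coe_finset, Int.card_Icc]
    have h3 : ((b n + 1 - a n).toNat : ℤ) = b n + 1 - a n :=
      Int.toNat_of_nonneg (by have := hab n hn; omega)
    have h4 : ((sgSlice S n).ncard : ℤ) ≤ ((Set.Icc (a n) (b n)).ncard : ℤ) := by
      exact_mod_cast h1
    rw [hcard n hn, h2, h3] at h4
    linarith
  -- Fekete for the min
  have hsubmin : ∀ m, N₁ ≤ m → ∀ n, N₁ ≤ n →
      (fun n => ((a n : ℤ) : ℝ)) (m + n) ≤ ((a m : ℝ)) + ((a n : ℝ)) := by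
    intro m hm n hn
    have hmem : ((m + n, a m + a n) : ℕ × ℤ) ∈ S := by
      have := hadd (m, a m) (haS m hm) (n, a n) (haS n hn)
      rwa [Prod.mk_add_mk] at this
    have h1 : a (m + n) ≤ a m + a n := ha_le (m + n) (by omega) _ hmem
    show ((a (m + n) : ℤ) : ℝ) ≤ ((a m : ℝ)) + ((a n : ℝ))
    exact_mod_cast h1
  have hCa : ∀ n, N₁ ≤ n → |((a n : ℤ) : ℝ)| ≤ C * n := by
    intro n hn
    have := hC (n, a n) (haS n hn) (by omega)
    simpa using this
  obtain ⟨smin, hsmin_t, hsmin_le⟩ :=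
    fekete (fun n => ((a n : ℤ) : ℝ)) N₁ hN₁1 hsubmin C hCa
  -- Fekete for the max (negated)
  have hsubmax : ∀ m, N₁ ≤ m → ∀ n, N₁ ≤ n →
      (fun n => -((b n : ℤ) : ℝ)) (m + n) ≤ (-(b m : ℝ)) + (-(b n : ℝ)) := by
    intro m hm n hn
    have hmem : ((m + n, b m + b n) : ℕ × ℤ) ∈ S := by
      have := hadd (m, b m) (hbS m hm) (n, b n) (hbS n hn)
      rwa [Prod.mk_add_mk] at this
    have h1 : b m + b n ≤ b (m + n) := hb_ge (m + n) (by omega) _ hmem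
    have h2 : ((b m : ℝ)) + b n ≤ ((b (m + n) : ℤ) : ℝ) := by exact_mod_cast h1
    show -((b (m + n) : ℤ) : ℝ) ≤ (-(b m : ℝ)) + (-(b n : ℝ))
    linarith
  have hCb : ∀ n, N₁ ≤ n → |(fun n => -((b n : ℤ) : ℝ)) n| ≤ C * n := by
    intro n hn
    have := hC (n, b n) (hbS n hn) (by omega)
    simpa [abs_neg] using this
  obtain ⟨l2, hl2_t, hl2_le⟩ :=
    fekete (fun n => -((b n : ℤ) : ℝ)) N₁ hN₁1 hsubmax C hCb
  set smax : ℝ := -l2 with hsmaxdef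
  have hsmax_t : Tendsto (fun n : ℕ => ((b n : ℤ) : ℝ) / n) atTop (nhds smax) := by
    have h := hl2_t.neg
    refine h.congr fun n => ?_
    simp [neg_div]
  have hsmax_ge : ∀ n, N₁ ≤ n → ((b n : ℤ) : ℝ) / n ≤ smax := by
    intro n hn
    have := hl2_le n hn
    simp only [neg_div] at this
    rw [hsmaxdef]
    linarith [this]
  -- real inf/sup of slices
  have hInfR : ∀ n, N₁ ≤ n → sInf (sgSliceR S n) = ((a n : ℤ) : ℝ) := by
    intro n hn
    refine le_antisymm ?_ ?_
    · exact csInf_le ((hfin n hn).image _).bddBelow ⟨a n, haS n hn, rfl⟩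
    · refine le_csInf ((hne n hn).image _) ?_
      rintro x ⟨s, hs, rfl⟩
      show ((a n : ℤ) : ℝ) ≤ ((s : ℤ) : ℝ)
      exact_mod_cast ha_le n hn s hs
  have hSupR : ∀ n, N₁ ≤ n → sSup (sgSliceR S n) = ((b n : ℤ) : ℝ) := by
    intro n hn
    refine le_antisymm ?_ ?_
    · refine csSup_le ((hne n hn).image _) ?_
      rintro x ⟨s, hs, rfl⟩
      show ((s : ℤ) : ℝ) ≤ ((b n : ℤ) : ℝ)
      exact_mod_cast hb_ge n hn s hs
    · exact le_csSup ((hfin n hn).image _).bddAbove ⟨b n, hbS n hn, rfl⟩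
  have ht1 : Tendsto (fun n : ℕ => sInf (sgSliceR S n) / n) atTop (nhds smin) := by
    refine hsmin_t.congr' ?_
    filter_upwards [eventually_atTop.2 ⟨N₁, fun n hn => hn⟩] with n hn
    rw [hInfR n hn]
  have ht2 : Tendsto (fun n : ℕ => sSup (sgSliceR S n) / n) atTop (nhds smax) := by
    refine hsmax_t.congr' ?_
    filter_upwards [eventually_atTop.2 ⟨N₁, fun n hn => hn⟩] with n hn
    rw [hSupR n hn]
  -- slope bounds for all elements of S
  have hslope_min : ∀ p ∈ S, 1 ≤ p.1 → smin ≤ (p.2 : ℝ) / p.1 := by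
    rintro ⟨n, s⟩ hp hp1
    simp only at hp1 ⊢
    have hmemk : ∀ k : ℕ, 1 ≤ k → ((k * n, (k : ℤ) * s) : ℕ × ℤ) ∈ S := by
      intro k hk
      have h := sg_smul_mem S hadd (n, s) hp k hk
      have he : k • ((n, s) : ℕ × ℤ) = ((k * n, (k : ℤ) * s) : ℕ × ℤ) := by
        refine Prod.ext ?_ ?_
        · simp [smul_eq_mul]
        · show k • s = (k : ℤ) * s
          simp [nsmul_eq_mul]
      rwa [he] at h
    have hcmp : Tendsto (fun k : ℕ => k * n) atTop atTop :=
      tendsto_atTop_atTop.2 fun c => ⟨c, fun x hx =>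
        le_trans hx (Nat.le_mul_of_pos_right x (by omega))⟩
    have htend : Tendsto (fun k : ℕ => ((a (k * n) : ℤ) : ℝ) / (k * n : ℕ)) atTop
        (nhds smin) := hsmin_t.comp hcmp
    refine le_of_tendsto htend ?_
    filter_upwards [eventually_atTop.2 ⟨N₁, fun k hk => hk⟩] with k hk
    have hk1 : 1 ≤ k := by omega
    have hkn : N₁ ≤ k * n := le_trans hk (Nat.le_mul_of_pos_right k (by omega))
    have h1 : a (k * n) ≤ (k : ℤ) * s := ha_le _ hkn _ (hmemk k hk1)
    have hkn0 : (0 : ℝ) < ((k * n : ℕ) : ℝ) := by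
      have : 1 ≤ k * n := by
        calc 1 ≤ k := hk1
        _ ≤ k * n := Nat.le_mul_of_pos_right k (by omega)
      exact_mod_cast this
    have h2 : ((a (k * n) : ℤ) : ℝ) ≤ ((k : ℝ)) * s := by exact_mod_cast h1
    have h3 : ((k * n : ℕ) : ℝ) = (k : ℝ) * n := by push_cast; ring
    rw [div_le_div_iff₀ hkn0 (by positivity : (0:ℝ) < (n:ℝ))]
    calc ((a (k * n) : ℤ) : ℝ) * n ≤ ((k : ℝ) * s) * n := by
          have hn0 : (0:ℝ) ≤ (n:ℝ) := by positivity
          exact mul_le_mul_of_nonneg_right h2 hn0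
    _ = (s : ℝ) * ((k * n : ℕ) : ℝ) := by rw [h3]; ring
  have hslope_max : ∀ p ∈ S, 1 ≤ p.1 → (p.2 : ℝ) / p.1 ≤ smax := by
    rintro ⟨n, s⟩ hp hp1
    simp only at hp1 ⊢
    have hmemk : ∀ k : ℕ, 1 ≤ k → ((k * n, (k : ℤ) * s) : ℕ × ℤ) ∈ S := by
      intro k hk
      have h := sg_smul_mem S hadd (n, s) hp k hk
      have he : k • ((n, s) : ℕ × ℤ) = ((k * n, (k : ℤ) * s) : ℕ × ℤ) := by
        refine Prod.ext ?_ ?_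
        · simp [smul_eq_mul]
        · show k • s = (k : ℤ) * s
          simp [nsmul_eq_mul]
      rwa [he] at h
    have hcmp : Tendsto (fun k : ℕ => k * n) atTop atTop :=
      tendsto_atTop_atTop.2 fun c => ⟨c, fun x hx =>
        le_trans hx (Nat.le_mul_of_pos_right x (by omega))⟩
    have htend : Tendsto (fun k : ℕ => ((b (k * n) : ℤ) : ℝ) / (k * n : ℕ)) atTop
        (nhds smax) := hsmax_t.comp hcmp
    refine ge_of_tendsto htend ?_
    filter_upwards [eventually_atTop.2 ⟨N₁, fun k hk => hk⟩] with k hk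
    have hk1 : 1 ≤ k := by omega
    have hkn : N₁ ≤ k * n := le_trans hk (Nat.le_mul_of_pos_right k (by omega))
    have h1 : (k : ℤ) * s ≤ b (k * n) := hb_ge _ hkn _ (hmemk k hk1)
    have hkn0 : (0 : ℝ) < ((k * n : ℕ) : ℝ) := by
      have : 1 ≤ k * n := by
        calc 1 ≤ k := hk1
        _ ≤ k * n := Nat.le_mul_of_pos_right k (by omega)
      exact_mod_cast this
    have h2 : ((k : ℝ)) * s ≤ ((b (k * n) : ℤ) : ℝ) := by exact_mod_cast h1
    have h3 : ((k * n : ℕ) : ℝ) = (k : ℝ) * n := by push_cast; ring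
    rw [div_le_div_iff₀ (by positivity : (0:ℝ) < (n:ℝ)) hkn0]
    calc (s : ℝ) * ((k * n : ℕ) : ℝ) = ((k : ℝ) * s) * n := by rw [h3]; ring
    _ ≤ ((b (k * n) : ℤ) : ℝ) * n := by
          have hn0 : (0:ℝ) ≤ (n:ℝ) := by positivity
          exact mul_le_mul_of_nonneg_right h2 hn0
  -- no nontrivial elements over 0
  have hz : ∀ s : ℤ, ((0, s) : ℕ × ℤ) ∈ S → s = 0 := by
    intro s hs
    by_contra hs0
    have hmemk : ∀ k : ℕ, (a N₁ + (k : ℤ) * s) ∈ sgSlice S N₁ := by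
      intro k
      induction k with
      | zero => simpa [sgSlice] using haS N₁ le_rfl
      | succ k ih =>
        have h := hadd (N₁, a N₁ + (k : ℤ) * s) ih (0, s) hs
        have he : ((N₁, a N₁ + (k : ℤ) * s) : ℕ × ℤ) + (0, s)
            = ((N₁, a N₁ + ((k : ℕ) + 1 : ℤ) * s) : ℕ × ℤ) := by
          rw [Prod.mk_add_mk]
          refine Prod.ext (by simp) ?_
          show a N₁ + (k : ℤ) * s + s = a N₁ + ((k : ℕ) + 1 : ℤ) * s
          ring
        rw [he] at h
        have : ((k + 1 : ℕ) : ℤ) = ((k : ℕ) + 1 : ℤ) := by push_cast; ring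
        rw [show (((k+1 : ℕ)) : ℤ) * s = ((k : ℕ) + 1 : ℤ) * s by rw [this]]
        exact h
    have hinj : Function.Injective (fun k : ℕ => a N₁ + (k : ℤ) * s) := by
      intro k l h
      simp only at h
      have : (k : ℤ) * s = (l : ℤ) * s := by linarith
      have : (k : ℤ) = l := mul_right_cancel₀ hs0 this
      exact_mod_cast this
    exact (hfin N₁ le_rfl).not_infinite
      (Set.infinite_of_injective_forall_mem hinj hmemk)
  -- lower bound d ≤ smax - smin
  have hge : (d : ℝ) ≤ smax - smin := by
    have htd : Tendsto (fun n : ℕ => (d : ℝ) - (g : ℝ) / n) atTop (nhds ((d : ℝ) - 0)) :=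
      tendsto_const_nhds.sub (tendsto_const_div_atTop_nhds_zero_nat _)
    rw [sub_zero] at htd
    have hdiff : Tendsto (fun n : ℕ => ((b n : ℤ) : ℝ) / n - ((a n : ℤ) : ℝ) / n) atTop
        (nhds (smax - smin)) := hsmax_t.sub hsmin_t
    refine le_of_tendsto_of_tendsto htd hdiff ?_
    filter_upwards [eventually_atTop.2 ⟨N₁, fun n hn => hn⟩] with n hn
    have h := hgap n hn
    have hn0 : (0 : ℝ) < n := by
      have : 1 ≤ n := by omega
      exact_mod_cast this
    have hc : ((d : ℝ) * n - g) ≤ ((b n : ℤ) : ℝ) - ((a n : ℤ) : ℝ) := by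
      exact_mod_cast h
    have e1 : (d : ℝ) - (g : ℝ) / n = ((d : ℝ) * n - g) / n := by field_simp
    have e2 : ((b n : ℤ) : ℝ) / n - ((a n : ℤ) : ℝ) / n
        = (((b n : ℤ) : ℝ) - ((a n : ℤ) : ℝ)) / n := (sub_div _ _ _).symm
    rw [e1, e2]
    gcongr
  -- upper bound smax - smin ≤ d
  obtain ⟨N, t, hNg1, htS, ht1S⟩ := exists_pair S hadd hgen hz
  have hle : smax - smin ≤ (d : ℝ) := by
    refine le_of_forall_pos_le_add ?_
    intro ε hε
    have hsmin_t' := Metric.tendsto_atTop.1 hsmin_t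
    have hsmax_t' := Metric.tendsto_atTop.1 hsmax_t
    obtain ⟨M₁, hM₁⟩ := hsmin_t' (ε / 4) (by linarith)
    obtain ⟨M₂, hM₂⟩ := hsmax_t' (ε / 4) (by linarith)
    obtain ⟨K, hK⟩ := exists_nat_gt (2 * (d : ℝ) * N / ε)
    obtain ⟨M, hMN₁, hMge1, hMge2, hMgeK⟩ :
        ∃ M : ℕ, N₁ ≤ M ∧ M₁ ≤ M ∧ M₂ ≤ M ∧ K ≤ M :=
      ⟨N₁ + M₁ + M₂ + K, by omega, by omega, by omega, by omega⟩
    have hM0 : (0 : ℝ) < M := by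
      have : 1 ≤ M := by omega
      exact_mod_cast this
    have hdN : (d : ℝ) * N < ε / 2 * M := by
      have hKM : (K : ℝ) ≤ M := by exact_mod_cast hMgeK
      rw [div_lt_iff₀ hε] at hK
      calc (d : ℝ) * N < ε / 2 * K := by linarith
      _ ≤ ε / 2 * M := by
          have : (0:ℝ) < ε / 2 := by linarith
          exact mul_le_mul_of_nonneg_left hKM (le_of_lt this)
    -- apply key_card with M' = M + N, u = a M + t - 1, L = b M - a M
    have hmem0 : ((M + N, a M + t - 1) : ℕ × ℤ) ∈ S := by
      have h := hadd (M, a M) (haS M hMN₁) (N, t - 1) ht1S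
      rwa [Prod.mk_add_mk, show a M + (t - 1) = a M + t - 1 by ring] at h
    have hmem1 : ((M + N, a M + t - 1 + 1) : ℕ × ℤ) ∈ S := by
      have h := hadd (M, a M) (haS M hMN₁) (N, t) htS
      rwa [Prod.mk_add_mk, show a M + t = a M + t - 1 + 1 by ring] at h
    have hmem2 : ((M + N, a M + t - 1 + 1 + (b M - a M)) : ℕ × ℤ) ∈ S := by
      have h := hadd (M, b M) (hbS M hMN₁) (N, t) htS
      rwa [Prod.mk_add_mk, show b M + t = a M + t - 1 + 1 + (b M - a M) by ring] at h
    have hkey : (b M - a M) + 1 ≤ d * ((M + N : ℕ) : ℤ) :=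
      key_card d g S hadd n₀ hsl (M + N) (by omega) (a M + t - 1) (b M - a M)
        (by have := hab M hMN₁; omega) hmem0 hmem1 hmem2
    have hkeyR : ((b M : ℤ) : ℝ) - ((a M : ℤ) : ℝ) + 1 ≤ (d : ℝ) * ((M : ℝ) + N) := by
      have : ((b M - a M + 1 : ℤ) : ℝ) ≤ ((d * ((M + N : ℕ) : ℤ) : ℤ) : ℝ) := by
        exact_mod_cast hkey
      push_cast at this
      linarith
    have hc1 : |((a M : ℤ) : ℝ) / M - smin| < ε / 4 := by
      have := hM₁ M (by omega)
      rwa [Real.dist_eq] at this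
    have hc2 : |((b M : ℤ) : ℝ) / M - smax| < ε / 4 := by
      have := hM₂ M (by omega)
      rwa [Real.dist_eq] at this
    have hc1' := abs_sub_lt_iff.1 hc1
    have hc2' := abs_sub_lt_iff.1 hc2
    -- (b M - a M)/M ≤ d + ε/2
    have hdiv : (((b M : ℤ) : ℝ) - ((a M : ℤ) : ℝ)) / M ≤ (d : ℝ) + ε / 2 := by
      rw [div_le_iff₀ hM0]
      have : ((b M : ℤ) : ℝ) - ((a M : ℤ) : ℝ) ≤ (d : ℝ) * M + ε / 2 * M - 1 := by
        have h1 : (d : ℝ) * ((M : ℝ) + N) = (d : ℝ) * M + (d : ℝ) * N := by ring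
        linarith
      linarith
    have hsplit : ((b M : ℤ) : ℝ) / M - ((a M : ℤ) : ℝ) / M
        = (((b M : ℤ) : ℝ) - ((a M : ℤ) : ℝ)) / M := (sub_div _ _ _).symm
    have : smax - smin < ((b M : ℤ) : ℝ) / M - ((a M : ℤ) : ℝ) / M + ε / 2 := by
      linarith [hc1'.1, hc1'.2, hc2'.1, hc2'.2]
    rw [hsplit] at this
    linarith
  have heq : smax - smin = (d : ℝ) := le_antisymm hle hge
  -- the convex hull statement
  have hminmax : smin ≤ smax := by
    have : (0 : ℝ) < d := by exact_mod_cast hd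
    linarith
  set Λ : Set ℝ := {x : ℝ | ∃ p ∈ S, 1 ≤ p.1 ∧ x = (p.2 : ℝ) / (p.1 : ℝ)} with hΛdef
  have hΛsub : Λ ⊆ Set.Icc smin smax := by
    rintro x ⟨p, hp, hp1, rfl⟩
    exact ⟨hslope_min p hp hp1, hslope_max p hp hp1⟩
  have hsub1 : closure (convexHull ℝ Λ) ⊆ Set.Icc smin smax :=
    closure_minimal (convexHull_min hΛsub (convex_Icc _ _)) isClosed_Icc
  have hminmem : smin ∈ closure Λ := by
    refine mem_closure_of_tendsto hsmin_t ?_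
    filter_upwards [eventually_atTop.2 ⟨N₁, fun n hn => hn⟩] with n hn
    exact ⟨(n, a n), haS n hn, by omega, rfl⟩
  have hmaxmem : smax ∈ closure Λ := by
    refine mem_closure_of_tendsto hsmax_t ?_
    filter_upwards [eventually_atTop.2 ⟨N₁, fun n hn => hn⟩] with n hn
    exact ⟨(n, b n), hbS n hn, by omega, rfl⟩
  have hcl : closure Λ ⊆ closure (convexHull ℝ Λ) :=
    closure_mono (subset_convexHull ℝ Λ)
  have hconv : Convex ℝ (closure (convexHull ℝ Λ)) := (convex_convexHull ℝ Λ).closure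
  have hsub2 : Set.Icc smin smax ⊆ closure (convexHull ℝ Λ) := by
    rw [← segment_eq_Icc hminmax]
    exact hconv.segment_subset (hcl hminmem) (hcl hmaxmem)
  exact ⟨smin, smax, ht1, ht2, heq, Set.Subset.antisymm hsub1 hsub2⟩
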